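/- The unique fixed point p* of T in [u0, v0] is strictly increasing on [0,1]: for all s1, s2 ∈ [0,1] with s1 < s2 one has p*(s1) < p*(s2). -/

import Mathlib

open Set Filter

noncomputable def Tmap (c : ℝ → ℝ) (g : ℕ → ℝ) (δ : ℝ) (p : ℝ → ℝ) (s : ℝ) : ℝ :=
  sInf {y : ℝ | ∃ k : ℕ, ∃ t : ℝ, 1 ≤ k ∧ 0 ≤ t ∧ t ≤ s ∧
    y = c (s - t) + g k + δ * k * p (t / k)}

private lemma convex_superadd {c : ℝ → ℝ} (hconv : ConvexOn ℝ (Set.Icc 0 1) c)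
    (hc0 : c 0 = 0) {x y : ℝ} (hx : 0 ≤ x) (hy : 0 ≤ y) (hxy : x + y ≤ 1) :
    c x + c y ≤ c (x + y) := by
  rcases eq_or_lt_of_le (add_nonneg hx hy) with h | h
  · have hx0 : x = 0 := by linarith
    have hy0 : y = 0 := by linarith
    simp [hx0, hy0, hc0]
  · have hs1 : x + y ∈ Set.Icc (0:ℝ) 1 := ⟨le_of_lt h, hxy⟩
    have h01 : (0:ℝ) ∈ Set.Icc (0:ℝ) 1 := ⟨le_refl _, zero_le_one⟩
    have hxs : 0 ≤ x / (x + y) := div_nonneg hx h.le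
    have hys : 0 ≤ y / (x + y) := div_nonneg hy h.le
    have hsum : x / (x + y) + y / (x + y) = 1 := by field_simp
    have h1 : c x ≤ x / (x + y) * c (x + y) := by
      have h2 := hconv.2 hs1 h01 hxs hys hsum
      simp only [smul_eq_mul, mul_zero, add_zero, hc0] at h2
      rwa [div_mul_cancel₀ _ (ne_of_gt h)] at h2
    have h2 : c y ≤ y / (x + y) * c (x + y) := by
      have h2 := hconv.2 h01 hs1 hxs hys hsum
      simp only [smul_eq_mul, mul_zero, zero_add, hc0] at h2
      rwa [div_mul_cancel₀ _ (ne_of_gt h)] at h2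
    have : x / (x + y) * c (x + y) + y / (x + y) * c (x + y) = c (x + y) := by
      rw [← add_mul, hsum, one_mul]
    linarith

theorem equilibrium_price_strictMono (c : ℝ → ℝ) (g : ℕ → ℝ) (δ : ℝ)
(hc_diff : DifferentiableOn ℝ c (Set.Icc 0 1))
    (hc_mono : StrictMonoOn c (Set.Icc 0 1))
    (hc_conv : StrictConvexOn ℝ (Set.Icc 0 1) c)
    (hc0 : c 0 = 0) (hc'0 : 0 < deriv c 0)
    (hg_mono : StrictMonoOn g {k : ℕ | 1 ≤ k})
    (hg1 : g 1 = 0) (hg_nonneg : ∀ k : ℕ, 1 ≤ k → 0 ≤ g k)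
    (hg_top : Tendsto g atTop atTop)
    (hδ : 1 < δ)
    (pstar : ℝ → ℝ)
    (hp_cont : ContinuousOn pstar (Set.Icc 0 1))
    (hp_mem : ∀ s ∈ Set.Icc (0 : ℝ) 1, deriv c 0 * s ≤ pstar s ∧ pstar s ≤ c s)
    (hp_fix : ∀ s ∈ Set.Icc (0 : ℝ) 1, Tmap c g δ pstar s = pstar s) :
    ∀ s₁ ∈ Set.Icc (0 : ℝ) 1, ∀ s₂ ∈ Set.Icc (0 : ℝ) 1, s₁ < s₂ → pstar s₁ < pstar s₂ := by
  have hδ0 : (0:ℝ) < δ := by linarith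
  -- c is nonnegative and monotone facts
  have hcmono' : ∀ x y : ℝ, 0 ≤ x → x ≤ y → y ≤ 1 → c x ≤ c y := by
    intro x y hx hxy hy1
    rcases eq_or_lt_of_le hxy with h | h
    · rw [h]
    · exact (hc_mono ⟨hx, by linarith⟩ ⟨by linarith, hy1⟩ h).le
  have hcnn : ∀ x : ℝ, 0 ≤ x → x ≤ 1 → 0 ≤ c x := by
    intro x hx hx1
    have := hcmono' 0 x le_rfl hx hx1
    rwa [hc0] at this
  have hcpos : ∀ x : ℝ, 0 < x → x ≤ 1 → 0 < c x := by
    intro x hx hx1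
    have := hc_mono ⟨le_rfl, zero_le_one⟩ ⟨hx.le, hx1⟩ hx
    rwa [hc0] at this
  have hlb : ∀ x : ℝ, 0 ≤ x → x ≤ 1 → deriv c 0 * x ≤ pstar x := fun x h1 h2 =>
    (hp_mem x ⟨h1, h2⟩).1
  have hub : ∀ x : ℝ, 0 ≤ x → x ≤ 1 → pstar x ≤ c x := fun x h1 h2 =>
    (hp_mem x ⟨h1, h2⟩).2
  have hpnn : ∀ x : ℝ, 0 ≤ x → x ≤ 1 → 0 ≤ pstar x := by
    intro x h1 h2
    have := hlb x h1 h2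
    nlinarith
  have p0 : pstar 0 = 0 := by
    have h1 := hlb 0 le_rfl zero_le_one
    have h2 := hub 0 le_rfl zero_le_one
    rw [hc0] at h2
    nlinarith
  -- every element of the defining set is nonnegative (for bddBelow)
  have hval_nn : ∀ s : ℝ, 0 ≤ s → s ≤ 1 → ∀ k : ℕ, 1 ≤ k → ∀ t : ℝ, 0 ≤ t → t ≤ s →
      0 ≤ c (s - t) + g k + δ * k * pstar (t / k) := by
    intro s hs0 hs1 k hk t ht0 hts
    have hk1 : (1:ℝ) ≤ (k:ℝ) := by exact_mod_cast hk
    have hkpos : (0:ℝ) < (k:ℝ) := by linarith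
    have h1 : 0 ≤ c (s - t) := hcnn _ (by linarith) (by linarith)
    have h2 : 0 ≤ g k := hg_nonneg k hk
    have htk0 : 0 ≤ t / k := div_nonneg ht0 hkpos.le
    have htk1 : t / k ≤ 1 := le_trans (div_le_self ht0 hk1) (by linarith)
    have h3 : 0 ≤ δ * k * pstar (t / k) :=
      mul_nonneg (mul_nonneg hδ0.le hkpos.le) (hpnn _ htk0 htk1)
    linarith
  have hbdd : ∀ s : ℝ, 0 ≤ s → s ≤ 1 →
      BddBelow {y : ℝ | ∃ k : ℕ, ∃ t : ℝ, 1 ≤ k ∧ 0 ≤ t ∧ t ≤ s ∧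
        y = c (s - t) + g k + δ * k * pstar (t / k)} := by
    intro s hs0 hs1
    refine ⟨0, ?_⟩
    rintro y ⟨k, t, hk, ht0, hts, rfl⟩
    exact hval_nn s hs0 hs1 k hk t ht0 hts
  -- key inequality A: pstar s ≤ any candidate value
  have hA : ∀ s : ℝ, 0 ≤ s → s ≤ 1 → ∀ k : ℕ, 1 ≤ k → ∀ t : ℝ, 0 ≤ t → t ≤ s →
      pstar s ≤ c (s - t) + g k + δ * k * pstar (t / k) := by
    intro s hs0 hs1 k hk t ht0 hts
    rw [← hp_fix s ⟨hs0, hs1⟩]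
    exact csInf_le (hbdd s hs0 hs1) ⟨k, t, hk, ht0, hts, rfl⟩
  -- the infimum is attained
  have hattain : ∀ s : ℝ, 0 ≤ s → s ≤ 1 → ∃ k : ℕ, ∃ t : ℝ, 1 ≤ k ∧ 0 ≤ t ∧ t ≤ s ∧
      pstar s = c (s - t) + g k + δ * k * pstar (t / k) := by
    intro s hs0 hs1
    obtain ⟨K₀, hK₀⟩ := (hg_top.eventually (eventually_gt_atTop (c 1))).exists_forall_of_atTop
    set K := max K₀ 1 with hK
    have hK1 : 1 ≤ K := le_max_right _ _
    -- continuity of each candidate function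
    have hcont : ∀ k : ℕ, 1 ≤ k →
        ContinuousOn (fun t : ℝ => c (s - t) + g k + δ * k * pstar (t / k)) (Icc 0 s) := by
      intro k hk
      have hk1 : (1:ℝ) ≤ (k:ℝ) := by exact_mod_cast hk
      have h1 : ContinuousOn (fun t : ℝ => c (s - t)) (Icc 0 s) := by
        apply hc_diff.continuousOn.comp (continuous_const.sub continuous_id).continuousOn
        intro t ht
        exact ⟨by simp; linarith [ht.2], by simp; linarith [ht.1]⟩
      have h2 : ContinuousOn (fun t : ℝ => pstar (t / k)) (Icc 0 s) := by
        apply hp_cont.comp (continuous_id.div_const (k:ℝ)).continuousOn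
        intro t ht
        refine ⟨div_nonneg ht.1 (by linarith), ?_⟩
        exact le_trans (div_le_self ht.1 hk1) (le_trans ht.2 hs1)
      exact (h1.add continuousOn_const).add (continuousOn_const.mul h2)
    have hne : (Icc (0:ℝ) s).Nonempty := ⟨0, le_rfl, hs0⟩
    -- minimizer for each k
    have hmin : ∀ k : ℕ, 1 ≤ k → ∃ t ∈ Icc (0:ℝ) s,
        ∀ t' ∈ Icc (0:ℝ) s, c (s - t) + g k + δ * k * pstar (t / k) ≤
          c (s - t') + g k + δ * k * pstar (t' / k) := by
      intro k hk
      obtain ⟨t, ht, hmin⟩ := isCompact_Icc.exists_isMinOn hne (hcont k hk)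
      exact ⟨t, ht, fun t' ht' => hmin ht'⟩
    choose tt htt hmint using hmin
    -- minimize over k in Finset.Icc 1 K
    have hfne : (Finset.Icc 1 K).Nonempty := ⟨1, Finset.mem_Icc.mpr ⟨le_rfl, hK1⟩⟩
    obtain ⟨k₀, hk₀mem, hk₀min⟩ := Finset.exists_min_image (Finset.Icc 1 K)
      (fun k => if h : 1 ≤ k then c (s - tt k h) + g k + δ * k * pstar (tt k h / k) else 0) hfne
    have hk₀1 : 1 ≤ k₀ := (Finset.mem_Icc.mp hk₀mem).1
    refine ⟨k₀, tt k₀ hk₀1, hk₀1, (htt k₀ hk₀1).1, (htt k₀ hk₀1).2, ?_⟩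
    set v := c (s - tt k₀ hk₀1) + g k₀ + δ * k₀ * pstar (tt k₀ hk₀1 / k₀) with hv
    have hle : pstar s ≤ v := hA s hs0 hs1 k₀ hk₀1 _ (htt k₀ hk₀1).1 (htt k₀ hk₀1).2
    clear_value v
    have hge : v ≤ pstar s := by
      rw [← hp_fix s ⟨hs0, hs1⟩]
      refine le_csInf ⟨c (s - 0) + g 1 + δ * (1:ℕ) * pstar (0 / (1:ℕ)), 1, 0, le_rfl, le_rfl, hs0, rfl⟩ ?_
      rintro y ⟨k, t, hk, ht0, hts, rfl⟩
      by_cases hkK : k ≤ K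
      · have h1 := hk₀min k (Finset.mem_Icc.mpr ⟨hk, hkK⟩)
        simp only [dif_pos hk, dif_pos hk₀1] at h1
        rw [hv]
        exact le_trans h1 (hmint k hk t ⟨ht0, hts⟩)
      · push_neg at hkK
        have hgk : c 1 < g k := hK₀ k (le_trans (le_max_left _ _) hkK.le)
        have hv1 : v ≤ c s := by
          have h1 := hk₀min 1 (Finset.mem_Icc.mpr ⟨le_rfl, hK1⟩)
          simp only [dif_pos hk₀1, dif_pos (le_refl 1)] at h1
          push_cast at h1
          have h2 := hmint 1 le_rfl 0 ⟨le_rfl, hs0⟩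
          simp only [sub_zero, zero_div, p0, hg1, mul_zero, add_zero,
            Nat.cast_one, div_one, mul_one] at h2
          have h3 : c (s - tt 1 le_rfl) + g 1 + δ * pstar (tt 1 le_rfl) ≤ c s := by
            rw [hg1]; linarith
          calc v = c (s - tt k₀ hk₀1) + g k₀ + δ * k₀ * pstar (tt k₀ hk₀1 / k₀) := hv
            _ ≤ c (s - tt 1 le_rfl) + g 1 + δ * 1 * pstar (tt 1 le_rfl / 1) := h1
            _ ≤ c s := by simpa using h3
        have hcs : c s ≤ c 1 := hcmono' s 1 hs0 hs1 le_rfl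
        have h1 : 0 ≤ c (s - t) := hcnn _ (by linarith) (by linarith)
        have hk1 : (1:ℝ) ≤ (k:ℝ) := by exact_mod_cast hk
        have htk0 : 0 ≤ t / k := div_nonneg ht0 (by linarith)
        have htk1 : t / k ≤ 1 := le_trans (div_le_self ht0 hk1) (by linarith)
        have h3 : 0 ≤ δ * k * pstar (t / k) :=
          mul_nonneg (mul_nonneg hδ0.le (by linarith)) (hpnn _ htk0 htk1)
        linarith
    linarith
  -- differentiability of c at 0 and the small-scale bound
  have hdiff0 : DifferentiableAt ℝ c 0 := by
    by_contra h
    rw [deriv_zero_of_not_differentiableAt h] at hc'0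
    exact lt_irrefl 0 hc'0
  obtain ⟨ε₀, hε₀pos, hε₀⟩ : ∃ ε₀ : ℝ, 0 < ε₀ ∧ ∀ a : ℝ, 0 < a → a < ε₀ →
      c a < δ * deriv c 0 * a := by
    have hslope := hasDerivAt_iff_tendsto_slope.mp hdiff0.hasDerivAt
    have hlt : deriv c 0 < δ * deriv c 0 := by nlinarith
    have hev : ∀ᶠ x in nhdsWithin (0:ℝ) {(0:ℝ)}ᶜ, slope c 0 x < δ * deriv c 0 :=
      hslope.eventually_lt_const hlt
    have hev2 : ∀ᶠ x in nhdsWithin (0:ℝ) (Ioi 0), slope c 0 x < δ * deriv c 0 :=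
      hev.filter_mono (nhdsWithin_mono 0 (fun x hx => ne_of_gt hx))
    obtain ⟨u, hu, hsub⟩ := mem_nhdsGT_iff_exists_Ioo_subset.mp hev2
    refine ⟨u, hu, fun a ha hau => ?_⟩
    have := hsub ⟨ha, hau⟩
    simp only [mem_setOf_eq, slope_def_field] at this
    rw [hc0, sub_zero, sub_zero] at this
    calc c a = c a / a * a := by field_simp
      _ < δ * deriv c 0 * a := by
          apply mul_lt_mul_of_pos_right _ ha
          exact this
  -- main induction: no pair a < b with pstar b ≤ pstar a
  have key : ∀ n : ℕ, ∀ a b : ℝ, 0 < a → a < b → b ≤ 1 → b < ε₀ * 2 ^ n →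
      pstar b ≤ pstar a → False := by
    -- the descent step, shared by base and inductive cases
    have step : ∀ a b : ℝ, 0 < a → a < b → b ≤ 1 → pstar b ≤ pstar a →
        (∃ k : ℕ, ∃ t : ℝ, 2 ≤ k ∧ 0 < a / k ∧ a / k < t / k ∧ t / k ≤ b / 2 ∧
          pstar (t / k) ≤ pstar (a / k)) ∧ δ * deriv c 0 * a < c a := by
      intro a b ha hab hb1 hbad
      have ha1 : a ≤ 1 := by linarith
      have hcontab : ContinuousOn pstar (Icc a b) :=
        hp_cont.mono (Icc_subset_Icc (by linarith) hb1)
      obtain ⟨t₁, ht₁mem, ht₁min⟩ := isCompact_Icc.exists_isMinOn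
        ⟨a, left_mem_Icc.mpr hab.le⟩ hcontab
      set m := pstar t₁ with hm
      have hminab : ∀ x ∈ Icc a b, m ≤ pstar x := fun x hx => ht₁min hx
      -- last point of the argmin set
      set A := Icc a b ∩ pstar ⁻¹' (Iic m) with hAdef
      have hAclosed : IsClosed A :=
        hcontab.preimage_isClosed_of_isClosed isClosed_Icc isClosed_Iic
      have hAsub : A ⊆ Icc a b := inter_subset_left
      have hAcomp : IsCompact A := isCompact_Icc.of_isClosed_subset hAclosed hAsub
      have hAne : A.Nonempty := ⟨t₁, ht₁mem, Set.mem_preimage.mpr (Set.mem_Iic.mpr le_rfl)⟩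
      set t₀ := sSup A with ht₀def
      have ht₀A : t₀ ∈ A := hAcomp.sSup_mem hAne
      have ht₀mem : t₀ ∈ Icc a b := hAsub ht₀A
      have ht₀m : pstar t₀ = m := le_antisymm ht₀A.2 (hminab t₀ ht₀mem)
      have hmb : m ≤ pstar b := hminab b (right_mem_Icc.mpr hab.le)
      have hma : m ≤ pstar a := hminab a (left_mem_Icc.mpr hab.le)
      have ht₀a : a < t₀ := by
        rcases lt_or_eq_of_le ht₀mem.1 with h | h
        · exact h
        · exfalso
          have hmA : m = pstar a := by rw [← ht₀m, ← h]
          have hbA : b ∈ A := ⟨right_mem_Icc.mpr hab.le, by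
            simp only [mem_preimage, mem_Iic]; rw [hmA]; exact hbad⟩
          have : b ≤ t₀ := le_csSup hAcomp.bddAbove hbA
          linarith
      have ht₀0 : 0 ≤ t₀ := by linarith
      have ht₀1 : t₀ ≤ 1 := le_trans ht₀mem.2 hb1
      have hmlb : deriv c 0 * t₀ ≤ m := by rw [← ht₀m]; exact hlb t₀ ht₀0 ht₀1
      -- attained minimizer at t₀
      obtain ⟨k, t, hk1, ht0, htt₀, heq⟩ := hattain t₀ ht₀0 ht₀1
      rw [ht₀m] at heq
      have hk1' : (1:ℝ) ≤ (k:ℝ) := by exact_mod_cast hk1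
      have hkpos : (0:ℝ) < (k:ℝ) := by linarith
      have htk0 : 0 ≤ t / k := div_nonneg ht0 hkpos.le
      have htk1 : t / k ≤ 1 := le_trans (div_le_self ht0 hk1') (by linarith)
      have hcnn1 : 0 ≤ c (t₀ - t) := hcnn _ (by linarith) (by linarith)
      rcases le_or_gt t a with hta | hta
      · -- case t ≤ a : contradiction via convexity increment
        exfalso
        have hsup : c (a - t) + c (t₀ - a) ≤ c (t₀ - t) :=
          le_of_le_of_eq (convex_superadd hc_conv.convexOn hc0
            (by linarith) (by linarith) (by linarith)) (by ring_nf)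
        have hcpos' : 0 < c (t₀ - a) := hcpos _ (by linarith) (by linarith)
        have hAa := hA a ha.le ha1 k hk1 t ht0 hta
        linarith
      · -- case t > a
        rcases eq_or_lt_of_le hk1 with hk1eq | hk2
        · -- k = 1 : contradiction
          exfalso
          have hkk : k = 1 := hk1eq.symm
          subst hkk
          simp only [Nat.cast_one, mul_one, div_one, hg1, add_zero] at heq
          have hptm : m ≤ pstar t := hminab t ⟨hta.le, le_trans htt₀ ht₀mem.2⟩
          have ht₀pos : 0 < t₀ := by linarith
          have hmpos : 0 < m := lt_of_lt_of_le (mul_pos hc'0 ht₀pos) hmlb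
          have e1 : 1 * m < δ * m := mul_lt_mul_of_pos_right hδ hmpos
          have e2 : δ * m ≤ δ * pstar t := mul_le_mul_of_nonneg_left hptm (by linarith)
          linarith
        · -- k ≥ 2 : descent
          have hk2' : (2:ℝ) ≤ (k:ℝ) := by exact_mod_cast hk2
          constructor
          · refine ⟨k, t, hk2, ?_, ?_, ?_, ?_⟩
            · positivity
            · gcongr
            · have htb : t ≤ b := le_trans htt₀ ht₀mem.2
              have hb0 : (0:ℝ) ≤ b := by linarith
              calc t / k ≤ b / k := by gcongr
                _ ≤ b / 2 := by gcongr
            · -- pstar (t/k) ≤ pstar (a/k)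
              have hAa := hA a ha.le ha1 k hk1 a ha.le le_rfl
              simp only [sub_self, hc0, zero_add] at hAa
              have h1 : δ * k * pstar (t / k) ≤ m - g k := by linarith
              have h2 : pstar a - g k ≤ δ * k * pstar (a / k) := by linarith
              have hδk : 0 < δ * k := by positivity
              exact le_of_mul_le_mul_left (by linarith) hδk
          · -- δ * c'(0) * a < c a
            have hplb : deriv c 0 * (t / k) ≤ pstar (t / k) := hlb _ htk0 htk1
            have hgk : 0 ≤ g k := hg_nonneg k hk1
            have hca : pstar a ≤ c a := hub a ha.le ha1
            have hkt : δ * k * (deriv c 0 * (t / k)) = δ * deriv c 0 * t := by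
              field_simp
            have e1 : δ * k * (deriv c 0 * (t / k)) ≤ δ * k * pstar (t / k) :=
              mul_le_mul_of_nonneg_left hplb (by positivity)
            have e2 : δ * deriv c 0 * a < δ * deriv c 0 * t :=
              mul_lt_mul_of_pos_left hta (by positivity)
            linarith
    intro n
    induction n with
    | zero =>
      intro a b ha hab hb1 hbe hbad
      obtain ⟨-, hsmall⟩ := step a b ha hab hb1 hbad
      have haε : a < ε₀ := by
        have h2 : ε₀ * 2 ^ 0 = ε₀ := by norm_num
        rw [h2] at hbe; linarith
      linarith [hε₀ a ha haε]
    | succ n ih =>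
      intro a b ha hab hb1 hbe hbad
      obtain ⟨⟨k, t, hk2, h1, h2, h3, h4⟩, -⟩ := step a b ha hab hb1 hbad
      apply ih (a / k) (t / k) h1 h2 (by linarith) _ h4
      calc t / k ≤ b / 2 := h3
        _ < ε₀ * 2 ^ n := by
            rw [pow_succ] at hbe; linarith
  -- conclude
  intro s₁ hs₁ s₂ hs₂ hlt
  by_contra hcon
  push_neg at hcon
  rcases eq_or_lt_of_le hs₁.1 with h0 | h0
  · have h1 : deriv c 0 * s₂ ≤ pstar s₂ := hlb s₂ hs₂.1 hs₂.2
    rw [← h0, p0] at hcon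
    nlinarith
  · obtain ⟨n, hn⟩ := pow_unbounded_of_one_lt (1 / ε₀) (one_lt_two (α := ℝ))
    have hn' : 1 < ε₀ * 2 ^ n := by
      rw [div_lt_iff₀ hε₀pos] at hn
      linarith [hn]
    exact key n s₁ s₂ h0 hlt hs₂.2 (by linarith [hs₂.2]) hcon
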